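/- If f \in A^2(D) and f(a) = 0 for some a \in D, then g(z) = f(z)/(z-a) belongs to A^2(D). Consequently the zero-based invariant subspace I_{\{a\}} = \{f \in A^2(D) : f(a)=0\} equals (z-a) A^2(D). -/

import Mathlib

open MeasureTheory Metric Complex

/-- Membership in the Bergman space of the unit disc. -/
def BergmanDisc (f : ℂ → ℂ) : Prop :=
  DifferentiableOn ℂ f (ball (0:ℂ) 1) ∧
    Integrable (fun z => ‖f z‖ ^ 2) (volume.restrict (ball (0:ℂ) 1))

/-- If `f ∈ A²(D)` vanishes at `a ∈ D` then `f(z)/(z-a)` (i.e. the holomorphic `g` with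
`f = (z-a) g` on `D`) belongs to `A²(D)`; consequently the zero-based invariant subspace
`I_{a} = {f ∈ A² : f(a) = 0}` equals `(z-a) A²(D)`. -/
theorem bergman_zero_div (a : ℂ) (ha : a ∈ ball (0:ℂ) 1) (f : ℂ → ℂ) :
    (BergmanDisc f ∧ f a = 0) ↔
      ∃ g : ℂ → ℂ, BergmanDisc g ∧ ∀ z ∈ ball (0:ℂ) 1, f z = (z - a) * g z := by
  have ha' : ‖a‖ < 1 := by simpa [Complex.dist_eq] using ha
  constructor
  · rintro ⟨⟨hdiff, hint⟩, hfa⟩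
    set r : ℝ := (1 - ‖a‖) / 2 with hrdef
    have hrpos : 0 < r := by simp only [hrdef]; linarith
    have hsub : closedBall a r ⊆ ball (0:ℂ) 1 := by
      intro z hz
      simp only [mem_closedBall, Complex.dist_eq] at hz
      simp only [mem_ball, dist_zero_right]
      calc ‖z‖ = ‖(z - a) + a‖ := by ring_nf
        _ ≤ ‖z - a‖ + ‖a‖ := norm_add_le _ _
        _ ≤ r + ‖a‖ := by
            have : ‖z - a‖ ≤ r := by simpa using hz
            linarith
        _ < 1 := by simp only [hrdef]; linarith
    have hg_diff : DifferentiableOn ℂ (dslope f a) (ball (0:ℂ) 1) :=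
      (differentiableOn_dslope (isOpen_ball.mem_nhds ha)).2 hdiff
    have heq : ∀ z, f z = (z - a) * dslope f a z := by
      intro z
      by_cases hz : z = a
      · subst hz; simp [hfa]
      · rw [dslope_of_ne _ hz, slope_def_field]
        have hza : z - a ≠ 0 := sub_ne_zero.2 hz
        field_simp [hfa]
        simp [hfa]
    have hcont : ContinuousOn (fun z => ‖dslope f a z‖ ^ 2) (ball (0:ℂ) 1) :=
      (hg_diff.continuousOn.norm).pow 2
    have h1 : IntegrableOn (fun z => ‖dslope f a z‖ ^ 2) (closedBall a r) volume :=
      (hcont.mono hsub).integrableOn_compact (isCompact_closedBall a r)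
    have hmeasS2 : MeasurableSet (ball (0:ℂ) 1 \ closedBall a r) :=
      measurableSet_ball.diff measurableSet_closedBall
    have h2 : IntegrableOn (fun z => ‖dslope f a z‖ ^ 2)
        (ball (0:ℂ) 1 \ closedBall a r) volume := by
      have hbig : Integrable (fun z => (r ^ 2)⁻¹ * ‖f z‖ ^ 2)
          (volume.restrict (ball (0:ℂ) 1 \ closedBall a r)) :=
        (((show IntegrableOn (fun z => ‖f z‖ ^ 2) (ball (0:ℂ) 1) volume from hint).mono_set Set.diff_subset).const_mul _)
      refine Integrable.mono' hbig
        ((hcont.mono Set.diff_subset).aestronglyMeasurable hmeasS2) ?_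
      filter_upwards [ae_restrict_mem hmeasS2] with z hz
      have hzball := hz.1
      have hz2 : r < ‖z - a‖ := by
        have := hz.2
        simp only [mem_closedBall, Complex.dist_eq, not_le] at this
        simpa using this
      have hfz : ‖f z‖ = ‖z - a‖ * ‖dslope f a z‖ := by
        rw [heq z, norm_mul]
      rw [Real.norm_of_nonneg (by positivity), hfz]
      rw [mul_pow, inv_mul_eq_div, le_div_iff₀ (by positivity)]
      have hr2 : r ^ 2 ≤ ‖z - a‖ ^ 2 := by nlinarith
      nlinarith [mul_le_mul_of_nonneg_right hr2 (sq_nonneg ‖dslope f a z‖)]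
    have htotal : IntegrableOn (fun z => ‖dslope f a z‖ ^ 2) (ball (0:ℂ) 1) volume := by
      refine (h1.union h2).mono_set ?_
      intro z hz
      by_cases hc : z ∈ closedBall a r
      · exact Or.inl hc
      · exact Or.inr ⟨hz, hc⟩
    exact ⟨dslope f a, ⟨hg_diff, htotal⟩, fun z _ => heq z⟩
  · rintro ⟨g, ⟨hgd, hgi⟩, heq⟩
    have hdiff : DifferentiableOn ℂ f (ball (0:ℂ) 1) := by
      exact DifferentiableOn.congr
        (((differentiable_id.sub (differentiable_const a)).differentiableOn).mul hgd) heq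
    refine ⟨⟨hdiff, ?_⟩, ?_⟩
    · have hcont : ContinuousOn (fun z => ‖f z‖ ^ 2) (ball (0:ℂ) 1) :=
        (hdiff.continuousOn.norm).pow 2
      refine Integrable.mono' (hgi.const_mul 4)
        (hcont.aestronglyMeasurable measurableSet_ball) ?_
      filter_upwards [ae_restrict_mem measurableSet_ball] with z hz
      have hz1 : ‖z‖ < 1 := by simpa [Complex.dist_eq] using hz
      have hza : ‖z - a‖ < 2 := by
        calc ‖z - a‖ ≤ ‖z‖ + ‖a‖ := norm_sub_le _ _
          _ < 2 := by linarith
      have hfz : ‖f z‖ = ‖z - a‖ * ‖g z‖ := by rw [heq z hz, norm_mul]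
      rw [Real.norm_of_nonneg (by positivity), hfz]
      have h4 : ‖z - a‖ ^ 2 ≤ 4 := by nlinarith [norm_nonneg (z - a)]
      nlinarith [mul_le_mul_of_nonneg_right h4 (sq_nonneg ‖g z‖)]
    · have := heq a ha
      simp at this
      simpa using this
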